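/- Let f : R → S be a finite ring homomorphism (S module-finite over R), let T be a flat R-algebra, and let M be an R-module with S finitely presented over R. Then the natural map Hom_R(S, M) ⊗_R T → Hom_T(S ⊗_R T, M ⊗_R T), φ ⊗ u ↦ (s ⊗ v ↦ φ(s) ⊗ uv), is an isomorphism. Moreover, if R, S, T have characteristic p, M carries a Cartier structure κ, and we endow both sides with the induced Cartier structures (φ ↦ κ∘φ∘F on Hom's, and the localization/base-change structure on tensor factors when T is étale over R), then for T étale over R this isomorphism intertwines the Cartier structures. -/

import Mathlib

open TensorProduct

universe u

section Aux

variable {R T : Type*} [CommRing R] [CommRing T] [Algebra R T]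
variable {M : Type*} [AddCommGroup M] [Module R M]

/-- The natural base-change map on Hom modules. -/
noncomputable def etaMap (T : Type*) [CommRing T] [Algebra R T]
    (N : Type*) [AddCommGroup N] [Module R N] :
    T ⊗[R] (N →ₗ[R] M) →ₗ[T] ((T ⊗[R] N) →ₗ[T] (T ⊗[R] M)) :=
  (LinearMap.baseChangeHom R T N M).liftBaseChange T

@[simp] lemma etaMap_tmul {N : Type*} [AddCommGroup N] [Module R N]
    (u : T) (φ : N →ₗ[R] M) (v : T) (s : N) :
    etaMap (R := R) (M := M) T N (u ⊗ₜ[R] φ) (v ⊗ₜ[R] s) = (u * v) ⊗ₜ[R] φ s := by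
  simp [etaMap, smul_tmul', smul_eq_mul]

lemma etaMap_naturality {N N' : Type*} [AddCommGroup N] [Module R N]
    [AddCommGroup N'] [Module R N'] (g : N' →ₗ[R] N)
    (z : T ⊗[R] (N →ₗ[R] M)) (x : T ⊗[R] N') :
    etaMap (R := R) (M := M) T N' ((LinearMap.lcomp R M g).lTensor T z) x
      = etaMap (R := R) (M := M) T N z (g.baseChange T x) := by
  induction z using TensorProduct.induction_on with
  | zero => simp
  | tmul u φ =>
    induction x using TensorProduct.induction_on with
    | zero => simp
    | tmul v s => simp
    | add a b ha hb => simp only [map_add, ha, hb]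
  | add a b ha hb => simp only [map_add, LinearMap.add_apply, ha, hb]

lemma etaMap_bijective_of_basis {N : Type*} [AddCommGroup N] [Module R N]
    {ι : Type*} [Fintype ι] (b : Module.Basis ι R N) :
    Function.Bijective (etaMap (R := R) (M := M) T N) := by
  classical
  -- the "matrix coefficient" maps
  set c : ι → (M →ₗ[R] (N →ₗ[R] M)) := fun i => LinearMap.smulRightₗ (b.coord i) with hc
  have hc_apply : ∀ i (m : M) (n : N), c i m n = b.repr n i • m := by
    intro i m n; simp [hc, LinearMap.smulRightₗ_apply]
  set inv : ((T ⊗[R] N) →ₗ[T] (T ⊗[R] M)) → T ⊗[R] (N →ₗ[R] M) :=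
    fun F => ∑ i, ((c i).baseChange T) (F (1 ⊗ₜ[R] b i)) with hinv
  have key : ∀ (i : ι) (w : T ⊗[R] M) (v : T) (n : N),
      etaMap (R := R) (M := M) T N (((c i).baseChange T) w) (v ⊗ₜ[R] n)
        = v • (b.repr n i • w) := by
    intro i w v n
    induction w using TensorProduct.induction_on with
    | zero => simp
    | tmul t m =>
      simp only [LinearMap.baseChange_tmul, etaMap_tmul, hc_apply, ← tmul_smul, smul_tmul',
        smul_eq_mul, mul_comm v t]
    | add a b ha hb => simp only [map_add, LinearMap.add_apply, smul_add, ha, hb]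
  constructor
  · -- injective via left inverse
    have hleft : ∀ z, inv (etaMap (R := R) (M := M) T N z) = z := by
      intro z
      induction z using TensorProduct.induction_on with
      | zero => simp [hinv]
      | tmul u φ =>
        have : ∀ i, (etaMap (R := R) (M := M) T N (u ⊗ₜ[R] φ)) (1 ⊗ₜ[R] b i)
            = u ⊗ₜ[R] φ (b i) := by intro i; rw [etaMap_tmul, mul_one]
        simp only [hinv, this, LinearMap.baseChange_tmul]
        rw [← tmul_sum]
        congr 1
        ext n
        simp only [LinearMap.coe_sum, Finset.sum_apply, hc_apply]
        calc ∑ i, b.repr n i • φ (b i) = φ (∑ i, b.repr n i • b i) := by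
              rw [map_sum]; simp
          _ = φ n := by rw [b.sum_repr]
      | add a b ha hb =>
        have : inv (etaMap (R := R) (M := M) T N a + etaMap (R := R) (M := M) T N b)
            = inv (etaMap (R := R) (M := M) T N a) + inv (etaMap (R := R) (M := M) T N b) := by
          simp only [hinv, LinearMap.add_apply, map_add, Finset.sum_add_distrib]
        rw [map_add, this, ha, hb]
    intro z z' h
    have := congrArg inv h
    rwa [hleft, hleft] at this
  · -- surjective via right inverse
    intro F
    refine ⟨inv F, ?_⟩
    refine LinearMap.ext fun x => ?_
    induction x using TensorProduct.induction_on with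
    | zero => simp
    | tmul v n =>
      simp only [hinv, map_sum, LinearMap.coe_sum, Finset.sum_apply]
      have : ∀ i, etaMap (R := R) (M := M) T N (((c i).baseChange T) (F (1 ⊗ₜ[R] b i))) (v ⊗ₜ[R] n)
          = v • F ((1 : T) ⊗ₜ[R] (b.repr n i • b i)) := by
        intro i
        rw [key]
        congr 1
        rw [← algebraMap_smul T (b.repr n i) (F ((1:T) ⊗ₜ[R] b i)), ← map_smul,
          algebraMap_smul, smul_tmul', smul_tmul]
      rw [Finset.sum_congr rfl fun i _ => this i, ← Finset.smul_sum, ← map_sum, ← tmul_sum,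
        b.sum_repr, ← map_smul, smul_tmul', smul_eq_mul, mul_one]
    | add a b ha hb => simp only [map_add, ha, hb]

/-- Left-exactness of `Hom(-, W)`. -/
lemma lcomp_exact {A : Type*} [CommRing A]
    {N₁ N₂ N₃ W : Type*} [AddCommGroup N₁] [Module A N₁] [AddCommGroup N₂] [Module A N₂]
    [AddCommGroup N₃] [Module A N₃] [AddCommGroup W] [Module A W]
    (g : N₁ →ₗ[A] N₂) (π : N₂ →ₗ[A] N₃) (hπ : Function.Surjective π)
    (hex : Function.Exact g π) :
    Function.Exact (LinearMap.lcomp A W π) (LinearMap.lcomp A W g) := by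
  intro ψ
  constructor
  · intro h0
    have hle : LinearMap.ker π ≤ LinearMap.ker ψ := by
      intro x hx
      obtain ⟨y, hy⟩ := (hex x).mp hx
      have : ψ (g y) = 0 := LinearMap.congr_fun h0 y
      simpa [hy] using this
    refine ⟨((LinearMap.ker π).liftQ ψ hle).comp
      (π.quotKerEquivOfSurjective hπ).symm.toLinearMap, ?_⟩
    ext x
    have hx : (π.quotKerEquivOfSurjective hπ).symm (π x) = Submodule.Quotient.mk x := by
      rw [LinearEquiv.symm_apply_eq]
      rfl
    simp only [LinearMap.lcomp_apply, LinearMap.comp_apply, LinearEquiv.coe_coe, hx]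
    rfl
  · rintro ⟨φ, rfl⟩
    ext y
    have : π (g y) = 0 := hex.apply_apply_eq_zero y
    simp [this]

variable [Module.Flat R T]

theorem etaMap_bijective (N : Type*) [AddCommGroup N] [Module R N]
    [Module.Finite R N] [Module.FinitePresentation R N] :
    Function.Bijective (etaMap (R := R) (M := M) T N) := by
  classical
  obtain ⟨n, π, hπ⟩ := Module.Finite.exists_fin' R N
  have hker : (LinearMap.ker π).FG := Module.FinitePresentation.fg_ker π hπ
  obtain ⟨t, ht⟩ := hker
  set g : ((↑t : Set (Fin n → R)) →₀ R) →ₗ[R] (Fin n → R) :=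
    Finsupp.linearCombination R (Subtype.val : (↑t : Set (Fin n → R)) → (Fin n → R)) with hg
  have hexact : Function.Exact g π := by
    rw [LinearMap.exact_iff, hg, Finsupp.range_linearCombination, Subtype.range_coe]
    exact ht.symm
  -- the two comparison squares
  have hnat₁ : ∀ z x, etaMap (R := R) (M := M) T (Fin n → R) ((LinearMap.lcomp R M π).lTensor T z) x
      = etaMap (R := R) (M := M) T N z (π.baseChange T x) := fun z x => etaMap_naturality π z x
  have hnat₂ : ∀ z x,
      etaMap (R := R) (M := M) T ((↑t : Set (Fin n → R)) →₀ R) ((LinearMap.lcomp R M g).lTensor T z) x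
      = etaMap (R := R) (M := M) T (Fin n → R) z (g.baseChange T x) := fun z x => etaMap_naturality g z x
  have hη₂ : Function.Bijective (etaMap (R := R) (M := M) T (Fin n → R)) :=
    etaMap_bijective_of_basis (Pi.basisFun R (Fin n))
  have hη₃ : Function.Bijective (etaMap (R := R) (M := M) T ((↑t : Set (Fin n → R)) →₀ R)) :=
    etaMap_bijective_of_basis (Finsupp.basisSingleOne)
  -- top row exactness
  have hhom := lcomp_exact (W := M) g π hπ hexact
  have hhominj : Function.Injective (LinearMap.lcomp R M π) := by
    intro φ φ' h
    ext x
    obtain ⟨y, rfl⟩ := hπ x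
    exact LinearMap.congr_fun h y
  have htop : Function.Exact ((LinearMap.lcomp R M π).lTensor T)
      ((LinearMap.lcomp R M g).lTensor T) := Module.Flat.lTensor_exact T hhom
  have htopinj : Function.Injective ((LinearMap.lcomp R M π).lTensor T) :=
    Module.Flat.lTensor_preserves_injective_linearMap _ hhominj
  -- bottom row facts
  have hπT : Function.Surjective (π.baseChange T) := by
    rw [LinearMap.baseChange_eq_ltensor]
    exact LinearMap.lTensor_surjective T hπ
  have hβ₁inj : Function.Injective
      (fun F : (T ⊗[R] N) →ₗ[T] (T ⊗[R] M) => F.comp (π.baseChange T)) := by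
    intro F F' h
    refine LinearMap.ext fun x => ?_
    obtain ⟨y, rfl⟩ := hπT x
    exact LinearMap.congr_fun h y
  have hβcomp : ∀ (y : (T ⊗[R] N) →ₗ[T] (T ⊗[R] M)) x,
      y (π.baseChange T (g.baseChange T x)) = 0 := by
    intro y x
    have : π.baseChange T (g.baseChange T x) = 0 := by
      induction x using TensorProduct.induction_on with
      | zero => simp
      | tmul u q =>
        rw [LinearMap.baseChange_tmul, LinearMap.baseChange_tmul,
          hexact.apply_apply_eq_zero, tmul_zero]
      | add a b ha hb => rw [map_add, map_add, ha, hb, add_zero]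
    rw [this, map_zero]
  constructor
  · intro z z' h
    apply htopinj
    apply hη₂.injective
    refine LinearMap.ext fun x => ?_
    rw [hnat₁, hnat₁, h]
  · intro y
    obtain ⟨x₂, hx₂⟩ := hη₂.surjective (y.comp (π.baseChange T))
    have h3 : (LinearMap.lcomp R M g).lTensor T x₂ = 0 := by
      apply hη₃.injective
      refine LinearMap.ext fun x => ?_
      rw [hnat₂, hx₂, map_zero]
      simp only [LinearMap.comp_apply, LinearMap.zero_apply]
      exact hβcomp y x
    obtain ⟨x₁, hx₁⟩ := (htop x₂).mp h3
    refine ⟨x₁, ?_⟩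
    apply hβ₁inj
    refine LinearMap.ext fun x => ?_
    simp only [LinearMap.comp_apply]
    rw [← hnat₁, hx₁, hx₂]
    rfl

end Aux

/-- Flat base change for Hom: for `S` a finitely presented (finite) `R`-module and
`T` flat over `R`, `Hom_R(S,M) ⊗_R T ≃ Hom_T(S ⊗_R T, M ⊗_R T)` via
`φ ⊗ u ↦ (s ⊗ v ↦ φ(s) ⊗ uv)`; and when `T` is étale over `R` in characteristic `p`
this isomorphism intertwines the induced Cartier structures. -/
theorem stmt_15 {R T : Type u} {S M : Type*} [CommRing R] [CommRing S] [CommRing T]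
    [Algebra R S] [Algebra R T] [AddCommGroup M] [Module R M]
    (hfin : Module.Finite R S) (hfp : Module.FinitePresentation R S)
    (hflat : Module.Flat R T)
    (p : ℕ) (hp : p.Prime) (hchar : (p : R) = 0)
    (het : Algebra.Etale R T)
    (κ : M → M) (hκadd : ∀ a b : M, κ (a + b) = κ a + κ b)
    (hκsemi : ∀ (r : R) (m : M), κ (r ^ p • m) = r • κ m)
    (Θ : (S →ₗ[R] M) → (S →ₗ[R] M))
    (hΘ : ∀ (φ : S →ₗ[R] M) (s : S), Θ φ s = κ (φ (s ^ p)))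
    (κT : T ⊗[R] M → T ⊗[R] M)
    (hκTadd : ∀ a b : T ⊗[R] M, κT (a + b) = κT a + κT b)
    (hκT : ∀ (u : T) (m : M), κT ((u ^ p) ⊗ₜ[R] m) = u ⊗ₜ[R] κ m) :
    ∃ e : (T ⊗[R] (S →ₗ[R] M)) ≃ₗ[T] ((T ⊗[R] S) →ₗ[T] (T ⊗[R] M)),
      (∀ (u : T) (φ : S →ₗ[R] M) (v : T) (s : S),
        e (u ⊗ₜ[R] φ) (v ⊗ₜ[R] s) = (u * v) ⊗ₜ[R] φ s) ∧
      (∀ (u : T) (φ : S →ₗ[R] M) (a : T ⊗[R] S),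
        e (u ⊗ₜ[R] Θ φ) a = κT (e ((u ^ p) ⊗ₜ[R] φ) (a ^ p))) := by
  haveI := hfin
  haveI := hfp
  haveI := hflat
  have hbij := etaMap_bijective (R := R) (M := M) (T := T) S
  refine ⟨LinearEquiv.ofBijective _ hbij, ?_, ?_⟩
  · intro u φ v s
    show etaMap (R := R) (M := M) T S (u ⊗ₜ[R] φ) (v ⊗ₜ[R] s) = _
    rw [etaMap_tmul]
  · intro u φ a
    have hκT0 : κT 0 = 0 := by
      have h := hκTadd 0 0
      rw [add_zero] at h
      exact (left_eq_add.mp h)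
    have hcharTS : ((p : ℕ) : T ⊗[R] S) = 0 := by
      rw [← map_natCast (algebraMap R (T ⊗[R] S)) p, hchar, map_zero]
    induction a using TensorProduct.induction_on with
    | zero =>
      show etaMap (R := R) (M := M) T S _ 0 = κT (etaMap (R := R) (M := M) T S _ ((0 : T ⊗[R] S) ^ p))
      rw [zero_pow hp.ne_zero, map_zero, map_zero, hκT0]
    | tmul v s =>
      show etaMap (R := R) (M := M) T S (u ⊗ₜ[R] Θ φ) (v ⊗ₜ[R] s)
        = κT (etaMap (R := R) (M := M) T S ((u ^ p) ⊗ₜ[R] φ) ((v ⊗ₜ[R] s) ^ p))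
      rw [Algebra.TensorProduct.tmul_pow, etaMap_tmul, etaMap_tmul, ← mul_pow, hκT, hΘ]
    | add a b ha hb =>
      obtain ⟨r, hr⟩ := exists_add_pow_prime_eq hp a b
      rw [hcharTS, zero_mul, zero_mul, zero_mul, add_zero] at hr
      show etaMap (R := R) (M := M) T S (u ⊗ₜ[R] Θ φ) (a + b)
        = κT (etaMap (R := R) (M := M) T S ((u ^ p) ⊗ₜ[R] φ) ((a + b) ^ p))
      rw [map_add, hr, map_add, hκTadd]
      exact congrArg₂ (· + ·) ha hb
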